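/- Let G be a finite graph, u1 a source and u2 a sink, and w1 a monovalent (degree-1) vertex distinct from u1 and u2, with unique neighbor w2. Then the transpedance [u1 u2, w1 w2], defined as the signed ordered second cofactor of the Laplacian, equals 0. -/
import Mathlib


/-- The transpedance `[u1 u2, w1 w2]`: the signed ordered second cofactor of `M`,
i.e. the positionally signed cofactor of the `(u2,w2)`-entry of the positionally signed
`(u1,w1)`-minor, expressed by the standard permutation-sum identity for second cofactors. -/
def transp {n : ℕ} (M : Matrix (Fin n) (Fin n) ℤ) (u1 u2 w1 w2 : Fin n) : ℤ :=
  ∑ σ ∈ Finset.univ.filter (fun σ : Equiv.Perm (Fin n) => σ u1 = w1 ∧ σ u2 = w2),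
    ((Equiv.Perm.sign σ : ℤˣ) : ℤ) *
      ∏ i ∈ Finset.univ.filter (fun i : Fin n => i ≠ u1 ∧ i ≠ u2), M i (σ i)

/-- If `w1` is a monovalent vertex distinct from the source `u1` and sink `u2`, with unique
neighbor `w2`, then the transpedance `[u1 u2, w1 w2]` vanishes. -/
theorem monovalent_transpedance_zero {n : ℕ} (G : SimpleGraph (Fin n))
    [DecidableRel G.Adj] (hG : G.Connected) (u1 u2 w1 w2 : Fin n)
    (hdeg : G.degree w1 = 1) (h1 : w1 ≠ u1) (h2 : w1 ≠ u2) (hadj : G.Adj w1 w2) :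
    transp (G.lapMatrix ℤ) u1 u2 w1 w2 = 0 := by
  unfold transp
  apply Finset.sum_eq_zero
  intro σ hσ
  simp only [Finset.mem_filter, Finset.mem_univ, true_and] at hσ
  obtain ⟨hσ1, hσ2⟩ := hσ
  apply mul_eq_zero_of_right
  apply Finset.prod_eq_zero (i := w1)
  · simp [h1, h2]
  · -- σ w1 ≠ w1 and σ w1 ≠ w2
    have hne1 : σ w1 ≠ w1 := by
      intro h; exact h1 (σ.injective (h.trans hσ1.symm))
    have hne2 : σ w1 ≠ w2 := by
      intro h; exact h2 (σ.injective (h.trans hσ2.symm))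
    -- neighbors of w1 are exactly {w2}
    have hnbr : G.neighborFinset w1 = {w2} := by
      apply Finset.eq_singleton_iff_unique_mem.mpr
      refine ⟨(SimpleGraph.mem_neighborFinset G w1 w2).mpr hadj, ?_⟩
      intro x hx
      have hcard : (G.neighborFinset w1).card = 1 := hdeg
      obtain ⟨y, hy⟩ := Finset.card_eq_one.mp hcard
      rw [hy] at hx
      have : w2 ∈ ({y} : Finset (Fin n)) := by
        rw [← hy]; exact (SimpleGraph.mem_neighborFinset G w1 w2).mpr hadj
      simp_all
    have hnadj : ¬ G.Adj w1 (σ w1) := by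
      intro h
      have : σ w1 ∈ G.neighborFinset w1 := (SimpleGraph.mem_neighborFinset G w1 _).mpr h
      rw [hnbr, Finset.mem_singleton] at this
      exact hne2 this
    simp [SimpleGraph.lapMatrix, SimpleGraph.degMatrix, SimpleGraph.adjMatrix,
      hne1.symm, hnadj]
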